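/- Let h_{r1}, h_{r2} ∈ ℂ^N, G ∈ ℂ^{N×M}, and h_{d1}, h_{d2} ∈ ℂ^M. Set Φ_k = diag(h_{rk})·G ∈ ℂ^{N×M} for k = 1,2, and let R be the (N+1)×(N+1) block matrix R = [[Φ₁Φ₂ᴴ, Φ₁h_{d2}], [h_{d1}ᴴΦ₂ᴴ, h_{d1}ᴴh_{d2}]]. If R = 0, then for every phase vector v = (e^{jθ₁}, …, e^{jθ_N}) ∈ ℂ^N (indeed for every v ∈ ℂ^N), the effective channels h_k = Φ_kᴴv + h_{dk} satisfy h₁ᴴh₂ = 0. -/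
import Mathlib


open scoped Matrix

/-- Sufficiency direction of Proposition 4 of the paper: if the cross-correlation block
matrix `R` vanishes, then every choice of IRS phases yields orthogonal effective channels
`h₁ᴴh₂ = 0`. -/
theorem stmt_14 (N M : ℕ) (hr₁ hr₂ : Fin N → ℂ) (G : Matrix (Fin N) (Fin M) ℂ)
    (hd₁ hd₂ : Fin M → ℂ)
    (Φ₁ Φ₂ : Matrix (Fin N) (Fin M) ℂ)
    (hΦ₁ : Φ₁ = Matrix.diagonal hr₁ * G) (hΦ₂ : Φ₂ = Matrix.diagonal hr₂ * G)
    (R : Matrix (Fin N ⊕ Unit) (Fin N ⊕ Unit) ℂ)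
    (hR : R = Matrix.fromBlocks (Φ₁ * Φ₂ᴴ) (Matrix.of fun i _ => (Φ₁ *ᵥ hd₂) i)
        (Matrix.of fun _ j => (star hd₁ ᵥ* Φ₂ᴴ) j) (Matrix.of fun _ _ => star hd₁ ⬝ᵥ hd₂))
    (hR0 : R = 0) :
    ∀ v : Fin N → ℂ,
      star (Φ₁ᴴ *ᵥ v + hd₁) ⬝ᵥ (Φ₂ᴴ *ᵥ v + hd₂) = 0 := by
  subst hR
  intro v
  have h11 : Φ₁ * Φ₂ᴴ = 0 := by
    ext i j
    simpa using congrFun (congrFun hR0 (Sum.inl i)) (Sum.inl j)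
  have h12 : Φ₁ *ᵥ hd₂ = 0 := by
    ext i
    simpa using congrFun (congrFun hR0 (Sum.inl i)) (Sum.inr ())
  have h21 : star hd₁ ᵥ* Φ₂ᴴ = 0 := by
    ext j
    simpa using congrFun (congrFun hR0 (Sum.inr ())) (Sum.inl j)
  have h22 : star hd₁ ⬝ᵥ hd₂ = 0 := by
    simpa using congrFun (congrFun hR0 (Sum.inr ())) (Sum.inr ())
  have t1 : star (Φ₁ᴴ *ᵥ v) ⬝ᵥ (Φ₂ᴴ *ᵥ v) = 0 := by
    rw [Matrix.star_mulVec, Matrix.conjTranspose_conjTranspose,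
      Matrix.dotProduct_mulVec, Matrix.vecMul_vecMul, h11]
    simp
  have t2 : star (Φ₁ᴴ *ᵥ v) ⬝ᵥ hd₂ = 0 := by
    rw [Matrix.star_mulVec, Matrix.conjTranspose_conjTranspose,
      ← Matrix.dotProduct_mulVec, h12]
    simp
  have t3 : star hd₁ ⬝ᵥ (Φ₂ᴴ *ᵥ v) = 0 := by
    rw [Matrix.dotProduct_mulVec, h21]
    simp
  simp [star_add, add_dotProduct, dotProduct_add, t1, t2, t3, h22]
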